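/- Let C be a category with all finite limits and colimits which has splitting coproducts and disjoint coproducts, and consider the generalized core model structure: W = {f : A ⟶ B | there exists some morphism B ⟶ A}, Cof = (split epimorphisms).llp, Fib = (Cof ∩ W).rlp. Then this model structure is left proper and right proper: (i) given any pushout square with sides w : A ⟶ C in W and i : A ⟶ B in Cof, the induced morphism B ⟶ P opposite w lies in W; (ii) given any pullback square with sides w : B ⟶ Y in W and p : X ⟶ Y in Fib, the induced morphism Q ⟶ X opposite w lies in W. -/

import Mathlib

open CategoryTheory CategoryTheory.Limits

universe v u

section Preliminaries

variable {C : Type u} [Category.{v} C]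

/-- The right lifting class of a class of morphisms. -/
def MorphismPropertyRLP (S : MorphismProperty C) : MorphismProperty C :=
  fun _ _ g => ∀ ⦃A B : C⦄ (f : A ⟶ B), S f → HasLiftingProperty f g

/-- The left lifting class of a class of morphisms. -/
def MorphismPropertyLLP (S : MorphismProperty C) : MorphismProperty C :=
  fun _ _ f => ∀ ⦃X Y : C⦄ (g : X ⟶ Y), S g → HasLiftingProperty f g

/-- A category has splitting coproducts if every morphism into a binary coproduct
is, up to isomorphism, a coproduct of two morphisms. -/
def HasSplittingCoproducts (C : Type u) [Category.{v} C] [HasBinaryCoproducts C] : Prop :=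
  ∀ ⦃X A B : C⦄ (f : X ⟶ A ⨿ B), ∃ (XL XR : C) (fL : XL ⟶ A) (fR : XR ⟶ B)
    (φ : XL ⨿ XR ≅ X), φ.hom ≫ f = coprod.map fL fR

end Preliminaries

/-- The generalized core model structure on a finitely bicomplete category with
splitting and disjoint coproducts is left proper and right proper. -/
theorem generalizedCore_proper
    {C : Type u} [Category.{v} C] [HasFiniteLimits C] [HasFiniteColimits C]
    (hsplit : HasSplittingCoproducts C) [∀ A B : C, BinaryCoproductDisjoint A B]
    (W Cof Fib : MorphismProperty C)
    (hW : W = fun A B _ => Nonempty (B ⟶ A))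
    (hCof : Cof = MorphismPropertyLLP (fun _ _ f => IsSplitEpi f))
    (hFib : Fib = MorphismPropertyRLP (fun _ _ f => Cof f ∧ W f)) :
    (∀ ⦃A B C' P : C⦄ (w : A ⟶ C') (i : A ⟶ B) (h : C' ⟶ P) (k : B ⟶ P),
      IsPushout w i h k → W w → Cof i → W k) ∧
    (∀ ⦃Q X B Y : C⦄ (q : Q ⟶ X) (w' : Q ⟶ B) (p : X ⟶ Y) (w : B ⟶ Y),
      IsPullback q w' p w → W w → Fib p → W q) := by
  subst hW hCof hFib
  constructor
  · -- Left properness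
    intro A B C' P w i h k hPO hw hi
    obtain ⟨r⟩ := hw
    -- the split epi `coprod.desc i (𝟙 B)`
    have hse : IsSplitEpi (coprod.desc i (𝟙 B)) :=
      ⟨⟨⟨coprod.inr, by simp [coprod.inl_desc, coprod.inr_desc, coprod.inl_desc_assoc, coprod.inr_desc_assoc]⟩⟩⟩
    have hlp := hi (coprod.desc i (𝟙 B)) hse
    have sq : CommSq (coprod.inl : A ⟶ A ⨿ B) i (coprod.desc i (𝟙 B)) (𝟙 B) :=
      ⟨by simp [coprod.inl_desc, coprod.inr_desc, coprod.inl_desc_assoc, coprod.inr_desc_assoc]⟩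
    obtain ⟨⟨⟨l, hl₁, hl₂⟩⟩⟩ := hlp.sq_hasLift sq
    -- split `l : B ⟶ A ⨿ B`
    obtain ⟨BL, BR, lL, lR, φ, hφ⟩ := hsplit l
    -- split `i ≫ φ.inv : A ⟶ BL ⨿ BR`
    obtain ⟨AL, AR, aL, aR, ψ, hψ⟩ := hsplit (i ≫ φ.inv)
    have key : coprod.map (aL ≫ lL) (aR ≫ lR) = ψ.hom ≫ coprod.inl := by
      have h0 : ψ.hom ≫ coprod.inl = ψ.hom ≫ i ≫ φ.inv ≫ φ.hom ≫ l := by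
        simp [← hl₁]
      rw [reassoc_of% hψ, hφ, coprod.map_map] at h0
      exact h0.symm
    have hL : aL ≫ lL = coprod.inl ≫ ψ.hom := by
      have h1 := congrArg (fun t => (coprod.inl : AL ⟶ AL ⨿ AR) ≫ t) key
      simp only [coprod.inl_map, ← Category.assoc] at h1
      exact Mono.right_cancellation (f := (coprod.inl : A ⟶ A ⨿ B)) _ _ h1
    have hR : (coprod.inr ≫ ψ.hom) ≫ (coprod.inl : A ⟶ A ⨿ B) =
        (aR ≫ lR) ≫ coprod.inr := by
      have h1 := congrArg (fun t => (coprod.inr : AR ⟶ AL ⨿ AR) ≫ t) key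
      simp only [coprod.inr_map] at h1
      simpa [Category.assoc] using h1.symm
    -- the pullback of the two coprojections is initial
    have hinit : IsInitial (pullback (coprod.inl : A ⟶ A ⨿ B) coprod.inr) :=
      IsInitial.ofBinaryCoproductDisjoint
    have hRkey : aR ≫ lR = coprod.inr ≫ ψ.hom ≫ w ≫ r ≫ i := by
      have hext : pullback.fst (coprod.inl : A ⟶ A ⨿ B) coprod.inr ≫ (w ≫ r ≫ i) =
          pullback.snd (coprod.inl : A ⟶ A ⨿ B) coprod.inr :=
        hinit.hom_ext _ _
      calc aR ≫ lR = pullback.lift _ _ hR ≫ pullback.snd _ _ :=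
            (pullback.lift_snd _ _ hR).symm
        _ = pullback.lift _ _ hR ≫ pullback.fst _ _ ≫ (w ≫ r ≫ i) := by rw [hext]
        _ = coprod.inr ≫ ψ.hom ≫ w ≫ r ≫ i := by
            rw [← Category.assoc, pullback.lift_fst _ _ hR, Category.assoc]
    -- define the map `P ⟶ B`
    set y : B ⟶ B := φ.inv ≫ coprod.desc (lL ≫ w ≫ r ≫ i) lR with hy
    have hmain : w ≫ (r ≫ i) = i ≫ y := by
      rw [← cancel_epi ψ.hom]
      have hiy : ψ.hom ≫ i ≫ y = coprod.desc (aL ≫ lL ≫ w ≫ r ≫ i) (aR ≫ lR) := by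
        rw [hy]
        have : ψ.hom ≫ i ≫ φ.inv ≫ coprod.desc (lL ≫ w ≫ r ≫ i) lR =
            (ψ.hom ≫ (i ≫ φ.inv)) ≫ coprod.desc (lL ≫ w ≫ r ≫ i) lR := by
          simp [Category.assoc]
        rw [this, hψ, coprod.map_desc]
      rw [hiy]
      apply coprod.hom_ext
      · simp [reassoc_of% hL, coprod.inl_desc, coprod.inr_desc, coprod.inl_desc_assoc, coprod.inr_desc_assoc]
      · simp [hRkey, coprod.inl_desc, coprod.inr_desc, coprod.inl_desc_assoc, coprod.inr_desc_assoc]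
    exact ⟨hPO.desc (r ≫ i) y hmain⟩
  · -- Right properness
    intro Q X B Y q w' p w hPB hw hp
    obtain ⟨s⟩ := hw
    -- `coprod.inl : X ⟶ X ⨿ X` is a trivial cofibration
    have hcof : ∀ ⦃T S : C⦄ (g : T ⟶ S), IsSplitEpi g →
        HasLiftingProperty (coprod.inl : X ⟶ X ⨿ X) g := by
      intro T S g hg
      constructor
      intro u v sq
      exact ⟨⟨⟨coprod.desc u (coprod.inr ≫ v ≫ section_ g), by simp [coprod.inl_desc, coprod.inr_desc, coprod.inl_desc_assoc, coprod.inr_desc_assoc], by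
        apply coprod.hom_ext
        · simpa [coprod.inl_desc, coprod.inr_desc, coprod.inl_desc_assoc, coprod.inr_desc_assoc] using sq.w
        · simp [coprod.inl_desc, coprod.inr_desc, coprod.inl_desc_assoc, coprod.inr_desc_assoc]⟩⟩⟩
    have hW' : Nonempty ((X ⨿ X : C) ⟶ X) := ⟨coprod.desc (𝟙 X) (𝟙 X)⟩
    have hlp := hp (coprod.inl : X ⟶ X ⨿ X) ⟨hcof, hW'⟩
    have sq : CommSq (𝟙 X) (coprod.inl : X ⟶ X ⨿ X) p
        (coprod.desc p (p ≫ s ≫ w)) := ⟨by simp [coprod.inl_desc, coprod.inr_desc, coprod.inl_desc_assoc, coprod.inr_desc_assoc]⟩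
    obtain ⟨⟨⟨L, hL₁, hL₂⟩⟩⟩ := hlp.sq_hasLift sq
    have hα : (coprod.inr ≫ L) ≫ p = (p ≫ s) ≫ w := by
      rw [Category.assoc, hL₂]
      simp [coprod.inl_desc, coprod.inr_desc, coprod.inl_desc_assoc, coprod.inr_desc_assoc]
    exact ⟨hPB.lift (coprod.inr ≫ L) (p ≫ s) hα⟩
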